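/- Let α1, β1, α2, β2 ∈ (0,1) with α1+β1 ≥ 1 and α2+β2 ≥ 1, let w1, w2 ≥ 0, and let q1(a1,a2), q2(a1,a2) be the bilinear effective update probabilities of the MPR model with parameters p11, p22, p112, p221 ∈ [0,1]. Define E(a1,a2) = w1·E1(q1(a1,a2)) + w2·E2(q2(a1,a2)), where Ei(q) = 2αiβi(1-q)/((αi+βi)((αi+βi) - q(αi+βi-1))). Then for budgets Γ1, Γ2 ∈ (0,1], the minimum of E over 𝒫(Γ1)×𝒫(Γ2) is attained at some pair of vertices (v1, v2) ∈ V1 × V2, where Vk = {(1,0,0), (1-Γk, Γk, 0), (1-Γk, 0, Γk)}. -/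

import Mathlib

lemma conc2 (s x y a b : ℝ) (hs : 1 ≤ s) (hx : 0 ≤ x) (hx1 : x ≤ 1)
    (hy : 0 ≤ y) (hy1 : y ≤ 1) (ha : 0 ≤ a) (hb : 0 ≤ b) (hab : a + b = 1) :
    a * ((1-x)/(s*(s-x*(s-1)))) + b * ((1-y)/(s*(s-y*(s-1)))) ≤
      (1-(a*x+b*y))/(s*(s-(a*x+b*y)*(s-1))) := by
  have hs0 : 0 < s := by linarith
  have hDx : (1:ℝ) ≤ s - x*(s-1) := by nlinarith
  have hDy : (1:ℝ) ≤ s - y*(s-1) := by nlinarith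
  have hq0 : 0 ≤ a*x+b*y := by positivity
  have hq1 : a*x+b*y ≤ 1 := by nlinarith
  have hDq : (1:ℝ) ≤ s - (a*x+b*y)*(s-1) := by nlinarith
  obtain rfl : b = 1 - a := by linarith
  rw [← mul_div_assoc, ← mul_div_assoc, div_add_div _ _ (by positivity) (by positivity), div_le_div_iff₀ (by positivity) (by positivity)]
  nlinarith [mul_nonneg (mul_nonneg (mul_nonneg (sq_nonneg s) ha) hb)
    (mul_nonneg (sub_nonneg.mpr hs) (sq_nonneg (x-y))), sq_nonneg (x-y)]

lemma concE (α β : ℝ) (hα : 0 < α) (hβ : 0 < β) (hs : 1 ≤ α + β) (E : ℝ → ℝ)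
    (hE : ∀ q, E q = 2*α*β*(1-q) / ((α+β) * ((α+β) - q*(α+β-1)))) :
    ConcaveOn ℝ (Set.Icc (0:ℝ) 1) E := by
  refine ⟨convex_Icc _ _, fun x hx y hy a b ha hb hab => ?_⟩
  simp only [smul_eq_mul, hE]
  have hk : (0:ℝ) ≤ 2*α*β := by positivity
  have h := conc2 (α+β) x y a b hs hx.1 hx.2 hy.1 hy.2 ha hb hab
  have h2 := mul_le_mul_of_nonneg_left h hk
  calc a * (2*α*β*(1-x) / ((α+β) * ((α+β) - x*(α+β-1))))
        + b * (2*α*β*(1-y) / ((α+β) * ((α+β) - y*(α+β-1))))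
      = 2*α*β * (a * ((1-x)/((α+β)*((α+β)-x*(α+β-1))) )
          + b * ((1-y)/((α+β)*((α+β)-y*(α+β-1))))) := by ring
    _ ≤ 2*α*β * ((1-(a*x+b*y))/((α+β)*((α+β)-(a*x+b*y)*(α+β-1)))) := h2
    _ = 2*α*β*(1-(a*x+b*y)) / ((α+β) * ((α+β) - (a*x+b*y)*(α+β-1))) := by ring

lemma jensen3 {f : ℝ → ℝ} (hf : ConcaveOn ℝ (Set.Icc (0:ℝ) 1) f)
    (l0 l1 l2 x0 x1 x2 : ℝ) (h0 : 0 ≤ l0) (h1 : 0 ≤ l1) (h2 : 0 ≤ l2)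
    (hls : l0 + l1 + l2 = 1) (hx0 : x0 ∈ Set.Icc (0:ℝ) 1)
    (hx1 : x1 ∈ Set.Icc (0:ℝ) 1) (hx2 : x2 ∈ Set.Icc (0:ℝ) 1) :
    l0 * f x0 + l1 * f x1 + l2 * f x2 ≤ f (l0*x0 + l1*x1 + l2*x2) := by
  have := hf.le_map_sum (t := Finset.univ) (w := ![l0,l1,l2]) (p := ![x0,x1,x2])
    (by intro i _; fin_cases i <;> simpa) (by simp [Fin.sum_univ_three]; linarith)
    (by intro i _; fin_cases i <;> simpa)
  simpa [Fin.sum_univ_three, smul_eq_mul] using this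

lemma qIcc (x0 x1 x2 y0 y1 y2 p11 p22 p112 p221 : ℝ)
    (hx0 : 0 ≤ x0) (hx1 : 0 ≤ x1) (hx2 : 0 ≤ x2) (hxs : x0 + x1 + x2 = 1)
    (hy0 : 0 ≤ y0) (hy1 : 0 ≤ y1) (hy2 : 0 ≤ y2) (hys : y0 + y1 + y2 = 1)
    (hp11 : p11 ∈ Set.Icc (0:ℝ) 1) (hp22 : p22 ∈ Set.Icc (0:ℝ) 1)
    (hp112 : p112 ∈ Set.Icc (0:ℝ) 1) (hp221 : p221 ∈ Set.Icc (0:ℝ) 1) :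
    x1*y0*p11 + x0*y1*p22 + x1*y1*(1-(1-p112)*(1-p221)) + x1*y2*p112 + x2*y1*p221
      ∈ Set.Icc (0:ℝ) 1 := by
  obtain ⟨hp11a, hp11b⟩ := hp11
  obtain ⟨hp22a, hp22b⟩ := hp22
  obtain ⟨hp112a, hp112b⟩ := hp112
  obtain ⟨hp221a, hp221b⟩ := hp221
  have hc0 : 0 ≤ 1-(1-p112)*(1-p221) := by nlinarith
  have hc1 : 1-(1-p112)*(1-p221) ≤ 1 := by nlinarith
  constructor
  · have := mul_nonneg (mul_nonneg hx1 hy0) hp11a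
    have := mul_nonneg (mul_nonneg hx0 hy1) hp22a
    have := mul_nonneg (mul_nonneg hx1 hy1) hc0
    have := mul_nonneg (mul_nonneg hx1 hy2) hp112a
    have := mul_nonneg (mul_nonneg hx2 hy1) hp221a
    linarith
  · nlinarith [mul_nonneg hx0 hy0, mul_nonneg hx0 hy2, mul_nonneg hx2 hy0,
      mul_nonneg hx2 hy2, mul_nonneg (mul_nonneg hx1 hy0) (sub_nonneg.mpr hp11b),
      mul_nonneg (mul_nonneg hx0 hy1) (sub_nonneg.mpr hp22b),
      mul_nonneg (mul_nonneg hx1 hy1) (sub_nonneg.mpr hc1),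
      mul_nonneg (mul_nonneg hx1 hy2) (sub_nonneg.mpr hp112b),
      mul_nonneg (mul_nonneg hx2 hy1) (sub_nonneg.mpr hp221b)]

lemma key3 (w1 w2 : ℝ) (hw1 : 0 ≤ w1) (hw2 : 0 ≤ w2)
    (E1 E2 : ℝ → ℝ) (h1 : ConcaveOn ℝ (Set.Icc (0:ℝ) 1) E1)
    (h2 : ConcaveOn ℝ (Set.Icc (0:ℝ) 1) E2)
    (l0 l1 l2 : ℝ) (hl0 : 0 ≤ l0) (hl1 : 0 ≤ l1) (hl2 : 0 ≤ l2)
    (hls : l0 + l1 + l2 = 1)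
    (x y : Fin 3 → ℝ) (hx : ∀ i, x i ∈ Set.Icc (0:ℝ) 1)
    (hy : ∀ i, y i ∈ Set.Icc (0:ℝ) 1) :
    ∃ i : Fin 3, w1 * E1 (x i) + w2 * E2 (y i) ≤
      w1 * E1 (l0*x 0 + l1*x 1 + l2*x 2) + w2 * E2 (l0*y 0 + l1*y 1 + l2*y 2) := by
  have J1 := jensen3 h1 l0 l1 l2 (x 0) (x 1) (x 2) hl0 hl1 hl2 hls (hx 0) (hx 1) (hx 2)
  have J2 := jensen3 h2 l0 l1 l2 (y 0) (y 1) (y 2) hl0 hl1 hl2 hls (hy 0) (hy 1) (hy 2)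
  have J1' := mul_le_mul_of_nonneg_left J1 hw1
  have J2' := mul_le_mul_of_nonneg_left J2 hw2
  set F : Fin 3 → ℝ := fun i => w1 * E1 (x i) + w2 * E2 (y i) with hF
  obtain ⟨i, -, hi⟩ := Finset.exists_min_image Finset.univ F ⟨0, Finset.mem_univ 0⟩
  refine ⟨i, ?_⟩
  have m0 := mul_le_mul_of_nonneg_left (hi 0 (Finset.mem_univ 0)) hl0
  have m1 := mul_le_mul_of_nonneg_left (hi 1 (Finset.mem_univ 1)) hl1
  have m2 := mul_le_mul_of_nonneg_left (hi 2 (Finset.mem_univ 2)) hl2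
  have hFi : l0 * F i + l1 * F i + l2 * F i = F i := by linear_combination (F i) * hls
  simp only [hF] at m0 m1 m2 hFi ⊢
  nlinarith [m0, m1, m2]

theorem stmt_12 (α1 β1 α2 β2 w1 w2 p11 p22 p112 p221 Γ1 Γ2 : ℝ)
    (hα1 : α1 ∈ Set.Ioo (0:ℝ) 1) (hβ1 : β1 ∈ Set.Ioo (0:ℝ) 1)
    (hα2 : α2 ∈ Set.Ioo (0:ℝ) 1) (hβ2 : β2 ∈ Set.Ioo (0:ℝ) 1)
    (hs1 : 1 ≤ α1 + β1) (hs2 : 1 ≤ α2 + β2)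
    (hw1 : 0 ≤ w1) (hw2 : 0 ≤ w2)
    (hp11 : p11 ∈ Set.Icc (0:ℝ) 1) (hp22 : p22 ∈ Set.Icc (0:ℝ) 1)
    (hp112 : p112 ∈ Set.Icc (0:ℝ) 1) (hp221 : p221 ∈ Set.Icc (0:ℝ) 1)
    (hΓ1 : Γ1 ∈ Set.Ioc (0:ℝ) 1) (hΓ2 : Γ2 ∈ Set.Ioc (0:ℝ) 1)
    (q1 q2 : (Fin 3 → ℝ) → (Fin 3 → ℝ) → ℝ)
    (hq1 : ∀ a1 a2, q1 a1 a2 = a1 1 * a2 0 * p11 + a1 0 * a2 1 * p22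
        + a1 1 * a2 1 * (1 - (1-p112)*(1-p221)) + a1 1 * a2 2 * p112 + a1 2 * a2 1 * p221)
    (hq2 : ∀ a1 a2, q2 a1 a2 = a1 2 * a2 0 * p11 + a1 0 * a2 2 * p22
        + a1 2 * a2 2 * (1 - (1-p112)*(1-p221)) + a1 2 * a2 1 * p112 + a1 1 * a2 2 * p221)
    (E1 E2 : ℝ → ℝ)
    (hE1 : ∀ q, E1 q = 2*α1*β1*(1-q) / ((α1+β1) * ((α1+β1) - q*(α1+β1-1))))
    (hE2 : ∀ q, E2 q = 2*α2*β2*(1-q) / ((α2+β2) * ((α2+β2) - q*(α2+β2-1))))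
    (E : (Fin 3 → ℝ) → (Fin 3 → ℝ) → ℝ)
    (hE : ∀ a1 a2, E a1 a2 = w1 * E1 (q1 a1 a2) + w2 * E2 (q2 a1 a2))
    (P1 P2 : Set (Fin 3 → ℝ))
    (hP1 : P1 = {a : Fin 3 → ℝ | 0 ≤ a 0 ∧ 0 ≤ a 1 ∧ 0 ≤ a 2 ∧
                  a 0 + a 1 + a 2 = 1 ∧ a 1 + a 2 ≤ Γ1})
    (hP2 : P2 = {a : Fin 3 → ℝ | 0 ≤ a 0 ∧ 0 ≤ a 1 ∧ 0 ≤ a 2 ∧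
                  a 0 + a 1 + a 2 = 1 ∧ a 1 + a 2 ≤ Γ2}) :
    ∃ v1 ∈ ({![1,0,0], ![1-Γ1, Γ1, 0], ![1-Γ1, 0, Γ1]} : Set (Fin 3 → ℝ)),
    ∃ v2 ∈ ({![1,0,0], ![1-Γ2, Γ2, 0], ![1-Γ2, 0, Γ2]} : Set (Fin 3 → ℝ)),
      ∀ a1 ∈ P1, ∀ a2 ∈ P2, E v1 v2 ≤ E a1 a2 := by
  obtain ⟨hΓ1p, hΓ1le⟩ := hΓ1
  obtain ⟨hΓ2p, hΓ2le⟩ := hΓ2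
  have hc1 : ConcaveOn ℝ (Set.Icc (0:ℝ) 1) E1 := concE α1 β1 hα1.1 hβ1.1 hs1 E1 hE1
  have hc2 : ConcaveOn ℝ (Set.Icc (0:ℝ) 1) E2 := concE α2 β2 hα2.1 hβ2.1 hs2 E2 hE2
  set v : Fin 3 → Fin 3 → ℝ := ![![1,0,0], ![1-Γ1,Γ1,0], ![1-Γ1,0,Γ1]] with hv
  set u : Fin 3 → Fin 3 → ℝ := ![![1,0,0], ![1-Γ2,Γ2,0], ![1-Γ2,0,Γ2]] with hu
  have hvc : ∀ i : Fin 3, 0 ≤ v i 0 ∧ 0 ≤ v i 1 ∧ 0 ≤ v i 2 ∧ v i 0 + v i 1 + v i 2 = 1 := by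
    intro i; fin_cases i <;> norm_num [hv, Matrix.cons_val_two, Matrix.tail_cons, Matrix.head_cons] <;> constructor <;> linarith
  have huc : ∀ i : Fin 3, 0 ≤ u i 0 ∧ 0 ≤ u i 1 ∧ 0 ≤ u i 2 ∧ u i 0 + u i 1 + u i 2 = 1 := by
    intro i; fin_cases i <;> norm_num [hu, Matrix.cons_val_two, Matrix.tail_cons, Matrix.head_cons] <;> constructor <;> linarith
  -- Stage A: reduce the first argument to a vertex
  have stageA : ∀ a1 ∈ P1, ∀ a2 ∈ P2, ∃ i : Fin 3, E (v i) a2 ≤ E a1 a2 := by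
    intro a1 h1 a2 h2
    rw [hP1] at h1; rw [hP2] at h2
    obtain ⟨h10, h11, h12, h1s, h1g⟩ := h1
    obtain ⟨h20, h21, h22, h2s, h2g⟩ := h2
    have hl1 : 0 ≤ a1 1 / Γ1 := div_nonneg h11 hΓ1p.le
    have hl2 : 0 ≤ a1 2 / Γ1 := div_nonneg h12 hΓ1p.le
    have hl0 : 0 ≤ 1 - a1 1 / Γ1 - a1 2 / Γ1 := by
      have : (a1 1 + a1 2) / Γ1 ≤ 1 := by rw [div_le_one hΓ1p]; linarith
      rw [add_div] at this; linarith
    have hls : (1 - a1 1 / Γ1 - a1 2 / Γ1) + a1 1 / Γ1 + a1 2 / Γ1 = 1 := by ring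
    have ha0 : a1 0 = 1 - a1 1 - a1 2 := by linarith
    have hΓ1ne : Γ1 ≠ 0 := ne_of_gt hΓ1p
    have hxm : ∀ i : Fin 3, q1 (v i) a2 ∈ Set.Icc (0:ℝ) 1 := by
      intro i; rw [hq1]
      exact qIcc _ _ _ _ _ _ _ _ _ _ (hvc i).1 (hvc i).2.1 (hvc i).2.2.1 (hvc i).2.2.2
        h20 h21 h22 h2s hp11 hp22 hp112 hp221
    have hym : ∀ i : Fin 3, q2 (v i) a2 ∈ Set.Icc (0:ℝ) 1 := by
      intro i; rw [hq2]
      refine qIcc (v i 0) (v i 2) (v i 1) (a2 0) (a2 2) (a2 1) _ _ _ _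
        (hvc i).1 (hvc i).2.2.1 (hvc i).2.1 (by linarith [(hvc i).2.2.2])
        h20 h22 h21 (by linarith) hp11 hp22 hp112 hp221
    have hqd1 : q1 a1 a2 = (1 - a1 1 / Γ1 - a1 2 / Γ1) * q1 (v 0) a2
        + (a1 1 / Γ1) * q1 (v 1) a2 + (a1 2 / Γ1) * q1 (v 2) a2 := by
      simp only [hq1]
      simp only [hv, Matrix.cons_val_zero, Matrix.cons_val_one, Matrix.head_cons,
        Matrix.cons_val_two, Matrix.tail_cons]
      rw [ha0]; field_simp; ring
    have hqd2 : q2 a1 a2 = (1 - a1 1 / Γ1 - a1 2 / Γ1) * q2 (v 0) a2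
        + (a1 1 / Γ1) * q2 (v 1) a2 + (a1 2 / Γ1) * q2 (v 2) a2 := by
      simp only [hq2]
      simp only [hv, Matrix.cons_val_zero, Matrix.cons_val_one, Matrix.head_cons,
        Matrix.cons_val_two, Matrix.tail_cons]
      rw [ha0]; field_simp; ring
    obtain ⟨i, hi⟩ := key3 w1 w2 hw1 hw2 E1 E2 hc1 hc2
      (1 - a1 1 / Γ1 - a1 2 / Γ1) (a1 1 / Γ1) (a1 2 / Γ1) hl0 hl1 hl2 hls
      (fun i => q1 (v i) a2) (fun i => q2 (v i) a2) hxm hym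
    refine ⟨i, ?_⟩
    rw [hE a1 a2, hE (v i) a2, hqd1, hqd2]
    exact hi
  -- Stage B: reduce the second argument to a vertex
  have stageB : ∀ i : Fin 3, ∀ a2 ∈ P2, ∃ j : Fin 3, E (v i) (u j) ≤ E (v i) a2 := by
    intro i a2 h2
    rw [hP2] at h2
    obtain ⟨h20, h21, h22, h2s, h2g⟩ := h2
    have hl1 : 0 ≤ a2 1 / Γ2 := div_nonneg h21 hΓ2p.le
    have hl2 : 0 ≤ a2 2 / Γ2 := div_nonneg h22 hΓ2p.le
    have hl0 : 0 ≤ 1 - a2 1 / Γ2 - a2 2 / Γ2 := by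
      have : (a2 1 + a2 2) / Γ2 ≤ 1 := by rw [div_le_one hΓ2p]; linarith
      rw [add_div] at this; linarith
    have hls : (1 - a2 1 / Γ2 - a2 2 / Γ2) + a2 1 / Γ2 + a2 2 / Γ2 = 1 := by ring
    have ha0 : a2 0 = 1 - a2 1 - a2 2 := by linarith
    have hΓ2ne : Γ2 ≠ 0 := ne_of_gt hΓ2p
    have hxm : ∀ j : Fin 3, q1 (v i) (u j) ∈ Set.Icc (0:ℝ) 1 := by
      intro j; rw [hq1]
      exact qIcc _ _ _ _ _ _ _ _ _ _ (hvc i).1 (hvc i).2.1 (hvc i).2.2.1 (hvc i).2.2.2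
        (huc j).1 (huc j).2.1 (huc j).2.2.1 (huc j).2.2.2 hp11 hp22 hp112 hp221
    have hym : ∀ j : Fin 3, q2 (v i) (u j) ∈ Set.Icc (0:ℝ) 1 := by
      intro j; rw [hq2]
      refine qIcc (v i 0) (v i 2) (v i 1) (u j 0) (u j 2) (u j 1) _ _ _ _
        (hvc i).1 (hvc i).2.2.1 (hvc i).2.1 (by linarith [(hvc i).2.2.2])
        (huc j).1 (huc j).2.2.1 (huc j).2.1 (by linarith [(huc j).2.2.2])
        hp11 hp22 hp112 hp221
    have hqd1 : q1 (v i) a2 = (1 - a2 1 / Γ2 - a2 2 / Γ2) * q1 (v i) (u 0)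
        + (a2 1 / Γ2) * q1 (v i) (u 1) + (a2 2 / Γ2) * q1 (v i) (u 2) := by
      simp only [hq1]
      simp only [hu, Matrix.cons_val_zero, Matrix.cons_val_one, Matrix.head_cons,
        Matrix.cons_val_two, Matrix.tail_cons]
      rw [ha0]; field_simp; ring
    have hqd2 : q2 (v i) a2 = (1 - a2 1 / Γ2 - a2 2 / Γ2) * q2 (v i) (u 0)
        + (a2 1 / Γ2) * q2 (v i) (u 1) + (a2 2 / Γ2) * q2 (v i) (u 2) := by
      simp only [hq2]
      simp only [hu, Matrix.cons_val_zero, Matrix.cons_val_one, Matrix.head_cons,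
        Matrix.cons_val_two, Matrix.tail_cons]
      rw [ha0]; field_simp; ring
    obtain ⟨j, hj⟩ := key3 w1 w2 hw1 hw2 E1 E2 hc1 hc2
      (1 - a2 1 / Γ2 - a2 2 / Γ2) (a2 1 / Γ2) (a2 2 / Γ2) hl0 hl1 hl2 hls
      (fun j => q1 (v i) (u j)) (fun j => q2 (v i) (u j)) hxm hym
    refine ⟨j, ?_⟩
    rw [hE (v i) a2, hE (v i) (u j), hqd1, hqd2]
    exact hj
  obtain ⟨p, -, hp⟩ := Finset.exists_min_image (Finset.univ : Finset (Fin 3 × Fin 3))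
    (fun p => E (v p.1) (u p.2)) ⟨(0,0), Finset.mem_univ _⟩
  have hvmem : ∀ i : Fin 3, v i ∈ ({![1,0,0], ![1-Γ1, Γ1, 0], ![1-Γ1, 0, Γ1]} : Set (Fin 3 → ℝ)) := by
    intro i; fin_cases i <;> simp [hv]
  have humem : ∀ j : Fin 3, u j ∈ ({![1,0,0], ![1-Γ2, Γ2, 0], ![1-Γ2, 0, Γ2]} : Set (Fin 3 → ℝ)) := by
    intro j; fin_cases j <;> simp [hu]
  refine ⟨v p.1, hvmem p.1, u p.2, humem p.2, ?_⟩
  intro a1 h1 a2 h2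
  obtain ⟨i, hi⟩ := stageA a1 h1 a2 h2
  obtain ⟨j, hj⟩ := stageB i a2 h2
  have := hp (i, j) (Finset.mem_univ _)
  simp only at this
  linarith
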